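/- Weakening on the left is admissible: if the sequent Γ ⊢ Δ is derivable by a derivation not using the explicit weakening rules, then for any formula A, the sequent {A} ∪ Γ ⊢ Δ is derivable by a derivation of the same height not using explicit weakening. -/

import Mathlib

namespace Craig

abbrev var : Type := Nat
abbrev tm : Type := var
abbrev pred : Type := Nat

inductive form : Type
  | P : pred → List tm → form
  | Bot : form
  | Top : form
  | And : form → form → form
  | Or : form → form → form
  | Not : form → form
  | FAll : form → form
  | FEx : form → form
  deriving DecidableEq

def liftSub (s : var → tm) : var → tm
  | 0 => 0
  | n + 1 => (s n) + 1

def fsubst (s : var → tm) : form → form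
  | .P i tms => .P i (tms.map s)
  | .Bot => .Bot
  | .Top => .Top
  | .And A B => .And (fsubst s A) (fsubst s B)
  | .Or A B => .Or (fsubst s A) (fsubst s B)
  | .Not A => .Not (fsubst s A)
  | .FAll A => .FAll (fsubst (liftSub s) A)
  | .FEx A => .FEx (fsubst (liftSub s) A)

def preSuc : List Nat → List Nat
  | [] => []
  | 0 :: l => preSuc l
  | (n + 1) :: l => n :: preSuc l

def fv : form → List var
  | .P _ tms => tms
  | .Bot => []
  | .Top => []
  | .And A B => fv A ++ fv B
  | .Or A B => fv A ++ fv B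
  | .Not A => fv A
  | .FAll A => preSuc (fv A)
  | .FEx A => preSuc (fv A)

def posneg : form → Set pred × Set pred
  | .P i _ => ({i}, ∅)
  | .Bot => (∅, ∅)
  | .Top => (∅, ∅)
  | .And A B => ((posneg A).1 ∪ (posneg B).1, (posneg A).2 ∪ (posneg B).2)
  | .Or A B => ((posneg A).1 ∪ (posneg B).1, (posneg A).2 ∪ (posneg B).2)
  | .Not A => ((posneg A).2, (posneg A).1)
  | .FAll A => posneg A
  | .FEx A => posneg A

def pos (A : form) : Set pred := (posneg A).1
def neg (A : form) : Set pred := (posneg A).2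

def fAll (a : var) (A : form) : form :=
  .FAll (fsubst (fun v => if v = a then 0 else v + 1) A)
def fEx (a : var) (A : form) : form :=
  .FEx (fsubst (fun v => if v = a then 0 else v + 1) A)

def FAll_inst (t : tm) : form → form
  | .FAll A => fsubst (fun v => match v with | 0 => t | n + 1 => n) A
  | A => A

def FEx_inst (t : tm) : form → form
  | .FEx A => fsubst (fun v => match v with | 0 => t | n + 1 => n) A
  | A => A

abbrev Seq : Type := Set form × Set form

def fvs (S : Set form) : Set var := ⋃ A ∈ S, {v | v ∈ fv A}

inductive Deriv : Type
  | Init : Seq → Deriv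
  | BotL : Seq → Deriv
  | TopR : Seq → Deriv
  | AndL : Seq → Deriv → Deriv
  | AndR : Seq → Deriv → Deriv → Deriv
  | OrL : Seq → Deriv → Deriv → Deriv
  | OrR : Seq → Deriv → Deriv
  | NotL : Seq → Deriv → Deriv
  | NotR : Seq → Deriv → Deriv
  | AllL : Seq → Deriv → Deriv
  | AllR : Seq → Deriv → Deriv
  | ExL : Seq → Deriv → Deriv
  | ExR : Seq → Deriv → Deriv
  | WL : Seq → Deriv → Deriv
  | WR : Seq → Deriv → Deriv

def root : Deriv → Seq
  | .Init s => s
  | .BotL s => s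
  | .TopR s => s
  | .AndL s _ => s
  | .AndR s _ _ => s
  | .OrL s _ _ => s
  | .OrR s _ => s
  | .NotL s _ => s
  | .NotR s _ => s
  | .AllL s _ => s
  | .AllR s _ => s
  | .ExL s _ => s
  | .ExR s _ => s
  | .WL s _ => s
  | .WR s _ => s

def is_deriv : Deriv → Prop
  | .Init s => s.1.Finite ∧ s.2.Finite ∧ ∃ A, A ∈ s.1 ∧ A ∈ s.2
  | .BotL s => s.1.Finite ∧ s.2.Finite ∧ form.Bot ∈ s.1
  | .TopR s => s.1.Finite ∧ s.2.Finite ∧ form.Top ∈ s.2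
  | .AndL s d => s.1.Finite ∧ s.2.Finite ∧
      ∃ A B, form.And A B ∈ s.1 ∧ is_deriv d ∧ root d = ({A, B} ∪ s.1, s.2)
  | .AndR s dl dr => s.1.Finite ∧ s.2.Finite ∧
      ∃ A B, form.And A B ∈ s.2 ∧ is_deriv dl ∧ root dl = (s.1, s.2 ∪ {A}) ∧
        is_deriv dr ∧ root dr = (s.1, s.2 ∪ {B})
  | .OrL s dl dr => s.1.Finite ∧ s.2.Finite ∧
      ∃ A B, form.Or A B ∈ s.1 ∧ is_deriv dl ∧ root dl = ({A} ∪ s.1, s.2) ∧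
        is_deriv dr ∧ root dr = ({B} ∪ s.1, s.2)
  | .OrR s d => s.1.Finite ∧ s.2.Finite ∧
      ∃ A B, form.Or A B ∈ s.2 ∧ is_deriv d ∧ root d = (s.1, s.2 ∪ {A, B})
  | .NotL s d => s.1.Finite ∧ s.2.Finite ∧
      ∃ C, form.Not C ∈ s.1 ∧ is_deriv d ∧ root d = (s.1, s.2 ∪ {C})
  | .NotR s d => s.1.Finite ∧ s.2.Finite ∧
      ∃ C, form.Not C ∈ s.2 ∧ is_deriv d ∧ root d = ({C} ∪ s.1, s.2)
  | .AllL s d => s.1.Finite ∧ s.2.Finite ∧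
      ∃ A a t, fAll a A ∈ s.1 ∧ is_deriv d ∧
        root d = ({FAll_inst t (fAll a A)} ∪ s.1, s.2)
  | .AllR s d => s.1.Finite ∧ s.2.Finite ∧
      ∃ a A, fAll a A ∈ s.2 ∧ a ∉ fvs (s.1 ∪ s.2) ∧ is_deriv d ∧
        root d = (s.1, s.2 ∪ {A})
  | .ExL s d => s.1.Finite ∧ s.2.Finite ∧
      ∃ a A, fEx a A ∈ s.1 ∧ a ∉ fvs (s.1 ∪ s.2) ∧ is_deriv d ∧
        root d = ({A} ∪ s.1, s.2)
  | .ExR s d => s.1.Finite ∧ s.2.Finite ∧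
      ∃ A a t, fEx a A ∈ s.2 ∧ is_deriv d ∧
        root d = (s.1, s.2 ∪ {FEx_inst t (fEx a A)})
  | .WL s d => ∃ Γ Δ A, Γ.Finite ∧ Δ.Finite ∧ is_deriv d ∧ root d = (Γ, Δ) ∧
      s = ({A} ∪ Γ, Δ)
  | .WR s d => ∃ Γ Δ A, Γ.Finite ∧ Δ.Finite ∧ is_deriv d ∧ root d = (Γ, Δ) ∧
      s = (Γ, Δ ∪ {A})

def derivable (s : Seq) : Prop := ∃ d, is_deriv d ∧ root d = s

def noW : Deriv → Prop
  | .Init _ => True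
  | .BotL _ => True
  | .TopR _ => True
  | .AndL _ d => noW d
  | .AndR _ dl dr => noW dl ∧ noW dr
  | .OrL _ dl dr => noW dl ∧ noW dr
  | .OrR _ d => noW d
  | .NotL _ d => noW d
  | .NotR _ d => noW d
  | .AllL _ d => noW d
  | .AllR _ d => noW d
  | .ExL _ d => noW d
  | .ExR _ d => noW d
  | .WL _ _ => False
  | .WR _ _ => False

def height : Deriv → Nat
  | .Init _ => 0
  | .BotL _ => 0
  | .TopR _ => 0
  | .AndL _ d => height d + 1
  | .AndR _ dl dr => max (height dl) (height dr) + 1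
  | .OrL _ dl dr => max (height dl) (height dr) + 1
  | .OrR _ d => height d + 1
  | .NotL _ d => height d + 1
  | .NotR _ d => height d + 1
  | .AllL _ d => height d + 1
  | .AllR _ d => height d + 1
  | .ExL _ d => height d + 1
  | .ExR _ d => height d + 1
  | .WL _ d => height d + 1
  | .WR _ d => height d + 1

-- lemmas, to be inserted before theorem
lemma liftSub_comp (s t : var → tm) : liftSub (s ∘ t) = liftSub s ∘ liftSub t := by
  funext v; cases v <;> simp [liftSub]

lemma fsubst_comp (s t : var → tm) (A : form) :
    fsubst s (fsubst t A) = fsubst (s ∘ t) A := by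
  induction A generalizing s t <;>
    simp_all [fsubst, liftSub_comp, Function.comp]

lemma mem_preSuc {n : Nat} : ∀ {l : List Nat}, n ∈ preSuc l ↔ n + 1 ∈ l := by
  intro l; induction l with
  | nil => simp [preSuc]
  | cons a l ih => cases a <;> simp [preSuc, ih, Nat.succ_inj]

lemma fsubst_congr {s t : var → tm} (A : form) (h : ∀ x ∈ fv A, s x = t x) :
    fsubst s A = fsubst t A := by
  induction A generalizing s t with
  | P i tms => simpa [fsubst, fv] using List.map_congr_left h
  | Bot => rfl
  | Top => rfl
  | And A B ihA ihB =>
      simp only [fsubst]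
      rw [ihA fun x hx => h x (by simp [fv, hx]), ihB fun x hx => h x (by simp [fv, hx])]
  | Or A B ihA ihB =>
      simp only [fsubst]
      rw [ihA fun x hx => h x (by simp [fv, hx]), ihB fun x hx => h x (by simp [fv, hx])]
  | Not A ih => simp only [fsubst]; rw [ih h]
  | FAll A ih =>
      simp only [fsubst]; rw [ih ?_]
      intro x hx
      cases x with
      | zero => rfl
      | succ n => simp only [liftSub]; rw [h n (mem_preSuc.mpr hx)]
  | FEx A ih =>
      simp only [fsubst]; rw [ih ?_]
      intro x hx
      cases x with
      | zero => rfl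
      | succ n => simp only [liftSub]; rw [h n (mem_preSuc.mpr hx)]

lemma fsubst_idfun (A : form) : fsubst (fun x => x) A = A := by
  induction A with
  | P i tms => simp [fsubst]
  | Bot => rfl
  | Top => rfl
  | And A B ihA ihB => simp [fsubst, ihA, ihB]
  | Or A B ihA ihB => simp [fsubst, ihA, ihB]
  | Not A ih => simp [fsubst, ih]
  | FAll A ih =>
      have : liftSub (fun x => x) = fun x => x := by funext v; cases v <;> simp [liftSub]
      simp [fsubst, this, ih]
  | FEx A ih =>
      have : liftSub (fun x => x) = fun x => x := by funext v; cases v <;> simp [liftSub]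
      simp [fsubst, this, ih]

lemma fsubst_id (s : var → tm) (A : form) (h : ∀ x ∈ fv A, s x = x) :
    fsubst s A = A := by
  rw [fsubst_congr A h, fsubst_idfun]

lemma fv_fsubst (s : var → tm) (A : form) (x : var) :
    x ∈ fv (fsubst s A) ↔ ∃ y ∈ fv A, s y = x := by
  induction A generalizing s x with
  | P i tms => simp [fv, fsubst]
  | Bot => simp [fv, fsubst]
  | Top => simp [fv, fsubst]
  | And A B ihA ihB => simp [fv, fsubst, ihA, ihB]; aesop
  | Or A B ihA ihB => simp [fv, fsubst, ihA, ihB]; aesop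
  | Not A ih => simp [fv, fsubst, ih]
  | FAll A ih =>
      simp only [fv, fsubst]
      rw [mem_preSuc, ih]
      constructor
      · rintro ⟨y, hy, hsy⟩
        cases y with
        | zero => simp [liftSub] at hsy
        | succ n => exact ⟨n, mem_preSuc.mpr hy, by simpa [liftSub] using hsy⟩
      · rintro ⟨y, hy, hsy⟩
        exact ⟨y + 1, mem_preSuc.mp hy, by simp [liftSub, hsy]⟩
  | FEx A ih =>
      simp only [fv, fsubst]
      rw [mem_preSuc, ih]
      constructor
      · rintro ⟨y, hy, hsy⟩
        cases y with
        | zero => simp [liftSub] at hsy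
        | succ n => exact ⟨n, mem_preSuc.mpr hy, by simpa [liftSub] using hsy⟩
      · rintro ⟨y, hy, hsy⟩
        exact ⟨y + 1, mem_preSuc.mp hy, by simp [liftSub, hsy]⟩
lemma fsubst_fAll {π : var → var} (hπ : Function.Injective π) (a : var) (A : form) :
    fsubst π (fAll a A) = fAll (π a) (fsubst π A) := by
  simp only [fAll, fsubst, fsubst_comp]
  congr 1
  apply fsubst_congr
  intro v _
  by_cases h : v = a
  · simp [Function.comp, h, liftSub]
  · have h2 : π v ≠ π a := fun h' => h (hπ h')
    simp [Function.comp, h, h2, liftSub]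

lemma fsubst_fEx {π : var → var} (hπ : Function.Injective π) (a : var) (A : form) :
    fsubst π (fEx a A) = fEx (π a) (fsubst π A) := by
  simp only [fEx, fsubst, fsubst_comp]
  congr 1
  apply fsubst_congr
  intro v _
  by_cases h : v = a
  · simp [Function.comp, h, liftSub]
  · have h2 : π v ≠ π a := fun h' => h (hπ h')
    simp [Function.comp, h, h2, liftSub]

lemma FAll_inst_fAll (t : tm) (a : var) (A : form) :
    FAll_inst t (fAll a A) = fsubst (fun v => if v = a then t else v) A := by
  simp only [fAll, FAll_inst, fsubst_comp]
  apply fsubst_congr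
  intro v _
  by_cases h : v = a <;> simp [Function.comp, h]

lemma FEx_inst_fEx (t : tm) (a : var) (A : form) :
    FEx_inst t (fEx a A) = fsubst (fun v => if v = a then t else v) A := by
  simp only [fEx, FEx_inst, fsubst_comp]
  apply fsubst_congr
  intro v _
  by_cases h : v = a <;> simp [Function.comp, h]

lemma FAll_inst_rename {π : var → var} (hπ : Function.Injective π) (t : tm) (a : var) (A : form) :
    fsubst π (FAll_inst t (fAll a A)) = FAll_inst (π t) (fAll (π a) (fsubst π A)) := by
  rw [FAll_inst_fAll, FAll_inst_fAll, fsubst_comp, fsubst_comp]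
  apply fsubst_congr
  intro v _
  by_cases h : v = a
  · simp [Function.comp, h]
  · have h2 : π v ≠ π a := fun h' => h (hπ h')
    simp [Function.comp, h, h2]

lemma FEx_inst_rename {π : var → var} (hπ : Function.Injective π) (t : tm) (a : var) (A : form) :
    fsubst π (FEx_inst t (fEx a A)) = FEx_inst (π t) (fEx (π a) (fsubst π A)) := by
  rw [FEx_inst_fEx, FEx_inst_fEx, fsubst_comp, fsubst_comp]
  apply fsubst_congr
  intro v _
  by_cases h : v = a
  · simp [Function.comp, h]
  · have h2 : π v ≠ π a := fun h' => h (hπ h')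
    simp [Function.comp, h, h2]

lemma mem_fvs {x : var} {S : Set form} : x ∈ fvs S ↔ ∃ B ∈ S, x ∈ fv B := by
  simp [fvs]

lemma fvs_finite {S : Set form} (hS : S.Finite) : (fvs S).Finite := by
  apply Set.Finite.biUnion hS
  intro A _
  exact (fv A).finite_toSet

lemma fvs_image {π : var → var} (hπ : Function.Injective π) {a : var} {S : Set form}
    (h : a ∉ fvs S) : π a ∉ fvs (fsubst π '' S) := by
  intro hx
  rw [mem_fvs] at hx
  obtain ⟨B, ⟨C, hC, rfl⟩, hB⟩ := hx
  rw [fv_fsubst] at hB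
  obtain ⟨y, hy, hyx⟩ := hB
  exact h (mem_fvs.mpr ⟨C, hC, hπ hyx ▸ hy⟩)
lemma fix_image {π : var → tm} {S : Set form} (h : ∀ B ∈ S, fsubst π B = B) :
    fsubst π '' S = S := by
  rw [Set.image_congr h]; simp

lemma rename (π : var → var) (hπ : Function.Injective π) :
    ∀ d, is_deriv d → noW d →
    ∃ d', is_deriv d' ∧ noW d' ∧
      root d' = (fsubst π '' (root d).1, fsubst π '' (root d).2) ∧ height d' = height d := by
  intro d
  induction d with
  | Init s =>
      rintro ⟨h1, h2, B, hB1, hB2⟩ _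
      exact ⟨.Init (fsubst π '' s.1, fsubst π '' s.2),
        ⟨h1.image _, h2.image _, fsubst π B, ⟨B, hB1, rfl⟩, ⟨B, hB2, rfl⟩⟩, trivial, rfl, rfl⟩
  | BotL s =>
      rintro ⟨h1, h2, hB⟩ _
      exact ⟨.BotL (fsubst π '' s.1, fsubst π '' s.2),
        ⟨h1.image _, h2.image _, ⟨form.Bot, hB, rfl⟩⟩, trivial, rfl, rfl⟩
  | TopR s =>
      rintro ⟨h1, h2, hB⟩ _
      exact ⟨.TopR (fsubst π '' s.1, fsubst π '' s.2),
        ⟨h1.image _, h2.image _, ⟨form.Top, hB, rfl⟩⟩, trivial, rfl, rfl⟩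
  | AndL s d₀ ih =>
      rintro ⟨h1, h2, X, Y, hXY, hd₀, hr₀⟩ hnw
      obtain ⟨d', hd', hnw', hroot', hh'⟩ := ih hd₀ hnw
      refine ⟨.AndL (fsubst π '' s.1, fsubst π '' s.2) d',
        ⟨h1.image _, h2.image _, fsubst π X, fsubst π Y, ⟨X.And Y, hXY, rfl⟩, hd', ?_⟩,
        hnw', rfl, by simp [height, hh']⟩
      rw [hroot', hr₀]
      simp [Set.image_union, Set.image_insert_eq]
  | AndR s dl dr ihl ihr =>
      rintro ⟨h1, h2, X, Y, hXY, hdl, hrl, hdr, hrr⟩ ⟨hnwl, hnwr⟩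
      obtain ⟨dl', hdl', hnwl', hrootl', hhl'⟩ := ihl hdl hnwl
      obtain ⟨dr', hdr', hnwr', hrootr', hhr'⟩ := ihr hdr hnwr
      refine ⟨.AndR (fsubst π '' s.1, fsubst π '' s.2) dl' dr',
        ⟨h1.image _, h2.image _, fsubst π X, fsubst π Y, ⟨X.And Y, hXY, rfl⟩, hdl', ?_, hdr', ?_⟩,
        ⟨hnwl', hnwr'⟩, rfl, by simp [height, hhl', hhr']⟩
      · rw [hrootl', hrl]; simp [Set.image_union, Set.image_insert_eq]
      · rw [hrootr', hrr]; simp [Set.image_union, Set.image_insert_eq]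
  | OrL s dl dr ihl ihr =>
      rintro ⟨h1, h2, X, Y, hXY, hdl, hrl, hdr, hrr⟩ ⟨hnwl, hnwr⟩
      obtain ⟨dl', hdl', hnwl', hrootl', hhl'⟩ := ihl hdl hnwl
      obtain ⟨dr', hdr', hnwr', hrootr', hhr'⟩ := ihr hdr hnwr
      refine ⟨.OrL (fsubst π '' s.1, fsubst π '' s.2) dl' dr',
        ⟨h1.image _, h2.image _, fsubst π X, fsubst π Y, ⟨X.Or Y, hXY, rfl⟩, hdl', ?_, hdr', ?_⟩,
        ⟨hnwl', hnwr'⟩, rfl, by simp [height, hhl', hhr']⟩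
      · rw [hrootl', hrl]; simp [Set.image_union, Set.image_insert_eq]
      · rw [hrootr', hrr]; simp [Set.image_union, Set.image_insert_eq]
  | OrR s d₀ ih =>
      rintro ⟨h1, h2, X, Y, hXY, hd₀, hr₀⟩ hnw
      obtain ⟨d', hd', hnw', hroot', hh'⟩ := ih hd₀ hnw
      refine ⟨.OrR (fsubst π '' s.1, fsubst π '' s.2) d',
        ⟨h1.image _, h2.image _, fsubst π X, fsubst π Y, ⟨X.Or Y, hXY, rfl⟩, hd', ?_⟩,
        hnw', rfl, by simp [height, hh']⟩
      rw [hroot', hr₀]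
      simp [Set.image_union, Set.image_insert_eq]
  | NotL s d₀ ih =>
      rintro ⟨h1, h2, C, hC, hd₀, hr₀⟩ hnw
      obtain ⟨d', hd', hnw', hroot', hh'⟩ := ih hd₀ hnw
      refine ⟨.NotL (fsubst π '' s.1, fsubst π '' s.2) d',
        ⟨h1.image _, h2.image _, fsubst π C, ⟨C.Not, hC, rfl⟩, hd', ?_⟩,
        hnw', rfl, by simp [height, hh']⟩
      rw [hroot', hr₀]; simp [Set.image_union, Set.image_insert_eq]
  | NotR s d₀ ih =>
      rintro ⟨h1, h2, C, hC, hd₀, hr₀⟩ hnw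
      obtain ⟨d', hd', hnw', hroot', hh'⟩ := ih hd₀ hnw
      refine ⟨.NotR (fsubst π '' s.1, fsubst π '' s.2) d',
        ⟨h1.image _, h2.image _, fsubst π C, ⟨C.Not, hC, rfl⟩, hd', ?_⟩,
        hnw', rfl, by simp [height, hh']⟩
      rw [hroot', hr₀]; simp [Set.image_union, Set.image_insert_eq]
  | AllL s d₀ ih =>
      rintro ⟨h1, h2, B, a, t, hmem, hd₀, hr₀⟩ hnw
      obtain ⟨d', hd', hnw', hroot', hh'⟩ := ih hd₀ hnw
      refine ⟨.AllL (fsubst π '' s.1, fsubst π '' s.2) d',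
        ⟨h1.image _, h2.image _, fsubst π B, π a, π t, ?_, hd', ?_⟩,
        hnw', rfl, by simp [height, hh']⟩
      · rw [← fsubst_fAll hπ]; exact ⟨_, hmem, rfl⟩
      · rw [hroot', hr₀, ← FAll_inst_rename hπ]; simp [Set.image_union, Set.image_insert_eq]
  | AllR s d₀ ih =>
      rintro ⟨h1, h2, a, B, hmem, hfv, hd₀, hr₀⟩ hnw
      obtain ⟨d', hd', hnw', hroot', hh'⟩ := ih hd₀ hnw
      refine ⟨.AllR (fsubst π '' s.1, fsubst π '' s.2) d',
        ⟨h1.image _, h2.image _, π a, fsubst π B, ?_, ?_, hd', ?_⟩,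
        hnw', rfl, by simp [height, hh']⟩
      · rw [← fsubst_fAll hπ]; exact ⟨_, hmem, rfl⟩
      · rw [← Set.image_union]; exact fvs_image hπ hfv
      · rw [hroot', hr₀]; simp [Set.image_union, Set.image_insert_eq]
  | ExL s d₀ ih =>
      rintro ⟨h1, h2, a, B, hmem, hfv, hd₀, hr₀⟩ hnw
      obtain ⟨d', hd', hnw', hroot', hh'⟩ := ih hd₀ hnw
      refine ⟨.ExL (fsubst π '' s.1, fsubst π '' s.2) d',
        ⟨h1.image _, h2.image _, π a, fsubst π B, ?_, ?_, hd', ?_⟩,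
        hnw', rfl, by simp [height, hh']⟩
      · rw [← fsubst_fEx hπ]; exact ⟨_, hmem, rfl⟩
      · rw [← Set.image_union]; exact fvs_image hπ hfv
      · rw [hroot', hr₀]; simp [Set.image_union, Set.image_insert_eq]
  | ExR s d₀ ih =>
      rintro ⟨h1, h2, B, a, t, hmem, hd₀, hr₀⟩ hnw
      obtain ⟨d', hd', hnw', hroot', hh'⟩ := ih hd₀ hnw
      refine ⟨.ExR (fsubst π '' s.1, fsubst π '' s.2) d',
        ⟨h1.image _, h2.image _, fsubst π B, π a, π t, ?_, hd', ?_⟩,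
        hnw', rfl, by simp [height, hh']⟩
      · rw [← fsubst_fEx hπ]; exact ⟨_, hmem, rfl⟩
      · rw [hroot', hr₀, ← FEx_inst_rename hπ]; simp [Set.image_union, Set.image_insert_eq]
  | WL s d₀ ih => intro _ hnw; exact hnw.elim
  | WR s d₀ ih => intro _ hnw; exact hnw.elim
lemma weaken_aux (A : form) : ∀ (n : Nat) (d : Deriv) (Γ Δ : Set form),
    height d ≤ n → is_deriv d → noW d → root d = (Γ, Δ) →
    ∃ d', is_deriv d' ∧ noW d' ∧ root d' = ({A} ∪ Γ, Δ) ∧ height d' = height d := by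
  intro n
  induction n using Nat.strong_induction_on with
  | _ n ih =>
  intro d Γ Δ hh hd hnw hr
  cases d with
  | Init s =>
      simp only [root] at hr; subst hr
      obtain ⟨h1, h2, B, hB1, hB2⟩ := hd
      exact ⟨.Init ({A} ∪ Γ, Δ), ⟨(Set.finite_singleton A).union h1, h2, B,
        Set.mem_union_right _ hB1, hB2⟩, trivial, rfl, rfl⟩
  | BotL s =>
      simp only [root] at hr; subst hr
      obtain ⟨h1, h2, hB⟩ := hd
      exact ⟨.BotL ({A} ∪ Γ, Δ), ⟨(Set.finite_singleton A).union h1, h2,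
        Set.mem_union_right _ hB⟩, trivial, rfl, rfl⟩
  | TopR s =>
      simp only [root] at hr; subst hr
      obtain ⟨h1, h2, hB⟩ := hd
      exact ⟨.TopR ({A} ∪ Γ, Δ), ⟨(Set.finite_singleton A).union h1, h2, hB⟩,
        trivial, rfl, rfl⟩
  | AndL s d₀ =>
      simp only [root] at hr; subst hr
      obtain ⟨h1, h2, X, Y, hXY, hd₀, hr₀⟩ := hd
      simp only [height] at hh
      obtain ⟨d', hd', hnw', hroot', hh'⟩ :=
        ih (height d₀) (by omega) d₀ ({X, Y} ∪ Γ) Δ le_rfl hd₀ hnw hr₀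
      refine ⟨.AndL ({A} ∪ Γ, Δ) d', ⟨(Set.finite_singleton A).union h1, h2, X, Y,
        Set.mem_union_right _ hXY, hd', ?_⟩, hnw', rfl, by simp [height, hh']⟩
      rw [hroot', Set.union_left_comm]
  | AndR s dl dr =>
      simp only [root] at hr; subst hr
      obtain ⟨h1, h2, X, Y, hXY, hdl, hrl, hdr, hrr⟩ := hd
      obtain ⟨hnwl, hnwr⟩ := hnw
      simp only [height] at hh
      obtain ⟨dl', hdl', hnwl', hrootl', hhl'⟩ :=
        ih (height dl) (by omega) dl Γ (Δ ∪ {X}) le_rfl hdl hnwl hrl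
      obtain ⟨dr', hdr', hnwr', hrootr', hhr'⟩ :=
        ih (height dr) (by omega) dr Γ (Δ ∪ {Y}) le_rfl hdr hnwr hrr
      exact ⟨.AndR ({A} ∪ Γ, Δ) dl' dr', ⟨(Set.finite_singleton A).union h1, h2, X, Y,
        hXY, hdl', hrootl', hdr', hrootr'⟩, ⟨hnwl', hnwr'⟩, rfl,
        by simp [height, hhl', hhr']⟩
  | OrL s dl dr =>
      simp only [root] at hr; subst hr
      obtain ⟨h1, h2, X, Y, hXY, hdl, hrl, hdr, hrr⟩ := hd
      obtain ⟨hnwl, hnwr⟩ := hnw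
      simp only [height] at hh
      obtain ⟨dl', hdl', hnwl', hrootl', hhl'⟩ :=
        ih (height dl) (by omega) dl ({X} ∪ Γ) Δ le_rfl hdl hnwl hrl
      obtain ⟨dr', hdr', hnwr', hrootr', hhr'⟩ :=
        ih (height dr) (by omega) dr ({Y} ∪ Γ) Δ le_rfl hdr hnwr hrr
      rw [Set.union_left_comm] at hrootl' hrootr'
      exact ⟨.OrL ({A} ∪ Γ, Δ) dl' dr', ⟨(Set.finite_singleton A).union h1, h2, X, Y,
        Set.mem_union_right _ hXY, hdl', hrootl', hdr', hrootr'⟩, ⟨hnwl', hnwr'⟩, rfl,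
        by simp [height, hhl', hhr']⟩
  | OrR s d₀ =>
      simp only [root] at hr; subst hr
      obtain ⟨h1, h2, X, Y, hXY, hd₀, hr₀⟩ := hd
      simp only [height] at hh
      obtain ⟨d', hd', hnw', hroot', hh'⟩ :=
        ih (height d₀) (by omega) d₀ Γ (Δ ∪ {X, Y}) le_rfl hd₀ hnw hr₀
      exact ⟨.OrR ({A} ∪ Γ, Δ) d', ⟨(Set.finite_singleton A).union h1, h2, X, Y,
        hXY, hd', hroot'⟩, hnw', rfl, by simp [height, hh']⟩
  | NotL s d₀ =>
      simp only [root] at hr; subst hr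
      obtain ⟨h1, h2, C, hC, hd₀, hr₀⟩ := hd
      simp only [height] at hh
      obtain ⟨d', hd', hnw', hroot', hh'⟩ :=
        ih (height d₀) (by omega) d₀ Γ (Δ ∪ {C}) le_rfl hd₀ hnw hr₀
      exact ⟨.NotL ({A} ∪ Γ, Δ) d', ⟨(Set.finite_singleton A).union h1, h2, C,
        Set.mem_union_right _ hC, hd', hroot'⟩, hnw', rfl, by simp [height, hh']⟩
  | NotR s d₀ =>
      simp only [root] at hr; subst hr
      obtain ⟨h1, h2, C, hC, hd₀, hr₀⟩ := hd
      simp only [height] at hh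
      obtain ⟨d', hd', hnw', hroot', hh'⟩ :=
        ih (height d₀) (by omega) d₀ ({C} ∪ Γ) Δ le_rfl hd₀ hnw hr₀
      rw [Set.union_left_comm] at hroot'
      exact ⟨.NotR ({A} ∪ Γ, Δ) d', ⟨(Set.finite_singleton A).union h1, h2, C,
        hC, hd', hroot'⟩, hnw', rfl, by simp [height, hh']⟩
  | AllL s d₀ =>
      simp only [root] at hr; subst hr
      obtain ⟨h1, h2, B, a, t, hmem, hd₀, hr₀⟩ := hd
      simp only [height] at hh
      obtain ⟨d', hd', hnw', hroot', hh'⟩ :=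
        ih (height d₀) (by omega) d₀ ({FAll_inst t (fAll a B)} ∪ Γ) Δ le_rfl hd₀ hnw hr₀
      rw [Set.union_left_comm] at hroot'
      exact ⟨.AllL ({A} ∪ Γ, Δ) d', ⟨(Set.finite_singleton A).union h1, h2, B, a, t,
        Set.mem_union_right _ hmem, hd', hroot'⟩, hnw', rfl, by simp [height, hh']⟩
  | ExR s d₀ =>
      simp only [root] at hr; subst hr
      obtain ⟨h1, h2, B, a, t, hmem, hd₀, hr₀⟩ := hd
      simp only [height] at hh
      obtain ⟨d', hd', hnw', hroot', hh'⟩ :=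
        ih (height d₀) (by omega) d₀ Γ (Δ ∪ {FEx_inst t (fEx a B)}) le_rfl hd₀ hnw hr₀
      exact ⟨.ExR ({A} ∪ Γ, Δ) d', ⟨(Set.finite_singleton A).union h1, h2, B, a, t,
        hmem, hd', hroot'⟩, hnw', rfl, by simp [height, hh']⟩
  | AllR s d₀ =>
      simp only [root] at hr; subst hr
      obtain ⟨h1, h2, a, B, hmem, hfv, hd₀, hr₀⟩ := hd
      simp only [height] at hh
      have hfin : (fvs (Γ ∪ Δ) ∪ ({v | v ∈ fv A} ∪ {v | v ∈ fv B})).Finite :=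
        (fvs_finite (h1.union h2)).union (((fv A).finite_toSet).union ((fv B).finite_toSet))
      obtain ⟨b, hb⟩ := hfin.infinite_compl.nonempty
      simp only [Set.mem_compl_iff, Set.mem_union, not_or, Set.mem_setOf_eq] at hb
      obtain ⟨hbΓΔ, hbA, hbB⟩ := hb
      have hπ : Function.Injective ⇑(Equiv.swap a b) := (Equiv.swap a b).injective
      obtain ⟨d₁, hd₁, hnw₁, hroot₁, hh₁⟩ := rename _ hπ d₀ hd₀ hnw
      rw [hr₀] at hroot₁
      have hfixΓ : fsubst ⇑(Equiv.swap a b) '' Γ = Γ := by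
        apply fix_image; intro C hC
        apply fsubst_id; intro x hx
        apply Equiv.swap_apply_of_ne_of_ne
        · rintro rfl; exact hfv (mem_fvs.mpr ⟨C, Set.mem_union_left _ hC, hx⟩)
        · rintro rfl; exact hbΓΔ (mem_fvs.mpr ⟨C, Set.mem_union_left _ hC, hx⟩)
      have hfixΔ : fsubst ⇑(Equiv.swap a b) '' Δ = Δ := by
        apply fix_image; intro C hC
        apply fsubst_id; intro x hx
        apply Equiv.swap_apply_of_ne_of_ne
        · rintro rfl; exact hfv (mem_fvs.mpr ⟨C, Set.mem_union_right _ hC, hx⟩)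
        · rintro rfl; exact hbΓΔ (mem_fvs.mpr ⟨C, Set.mem_union_right _ hC, hx⟩)
      simp only [Set.image_union, Set.image_singleton, hfixΓ, hfixΔ] at hroot₁
      obtain ⟨d₂, hd₂, hnw₂, hroot₂, hh₂⟩ :=
        ih (height d₀) (by omega) d₁ Γ (Δ ∪ {fsubst ⇑(Equiv.swap a b) B})
          (le_of_eq hh₁) hd₁ hnw₁ hroot₁
      have key : fAll b (fsubst ⇑(Equiv.swap a b) B) = fAll a B := by
        simp only [fAll, fsubst_comp]
        congr 1
        apply fsubst_congr
        intro v hv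
        by_cases hva : v = a
        · subst hva; simp [Function.comp, Equiv.swap_apply_left]
        · have hvb : v ≠ b := fun h => hbB (h ▸ hv)
          simp [Function.comp, Equiv.swap_apply_of_ne_of_ne hva hvb, hvb, hva]
      refine ⟨.AllR ({A} ∪ Γ, Δ) d₂, ⟨(Set.finite_singleton A).union h1, h2, b,
        fsubst ⇑(Equiv.swap a b) B, key ▸ hmem, ?_, hd₂, hroot₂⟩, hnw₂, rfl,
        by simp [height, hh₂, hh₁]⟩
      intro hx
      rw [mem_fvs] at hx
      obtain ⟨C, hC, hxC⟩ := hx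
      rcases hC with (hC | hC) | hC
      · rw [Set.mem_singleton_iff] at hC; subst hC; exact hbA hxC
      · exact hbΓΔ (mem_fvs.mpr ⟨C, Set.mem_union_left _ hC, hxC⟩)
      · exact hbΓΔ (mem_fvs.mpr ⟨C, Set.mem_union_right _ hC, hxC⟩)
  | ExL s d₀ =>
      simp only [root] at hr; subst hr
      obtain ⟨h1, h2, a, B, hmem, hfv, hd₀, hr₀⟩ := hd
      simp only [height] at hh
      have hfin : (fvs (Γ ∪ Δ) ∪ ({v | v ∈ fv A} ∪ {v | v ∈ fv B})).Finite :=
        (fvs_finite (h1.union h2)).union (((fv A).finite_toSet).union ((fv B).finite_toSet))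
      obtain ⟨b, hb⟩ := hfin.infinite_compl.nonempty
      simp only [Set.mem_compl_iff, Set.mem_union, not_or, Set.mem_setOf_eq] at hb
      obtain ⟨hbΓΔ, hbA, hbB⟩ := hb
      have hπ : Function.Injective ⇑(Equiv.swap a b) := (Equiv.swap a b).injective
      obtain ⟨d₁, hd₁, hnw₁, hroot₁, hh₁⟩ := rename _ hπ d₀ hd₀ hnw
      rw [hr₀] at hroot₁
      have hfixΓ : fsubst ⇑(Equiv.swap a b) '' Γ = Γ := by
        apply fix_image; intro C hC
        apply fsubst_id; intro x hx
        apply Equiv.swap_apply_of_ne_of_ne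
        · rintro rfl; exact hfv (mem_fvs.mpr ⟨C, Set.mem_union_left _ hC, hx⟩)
        · rintro rfl; exact hbΓΔ (mem_fvs.mpr ⟨C, Set.mem_union_left _ hC, hx⟩)
      have hfixΔ : fsubst ⇑(Equiv.swap a b) '' Δ = Δ := by
        apply fix_image; intro C hC
        apply fsubst_id; intro x hx
        apply Equiv.swap_apply_of_ne_of_ne
        · rintro rfl; exact hfv (mem_fvs.mpr ⟨C, Set.mem_union_right _ hC, hx⟩)
        · rintro rfl; exact hbΓΔ (mem_fvs.mpr ⟨C, Set.mem_union_right _ hC, hx⟩)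
      simp only [Set.image_union, Set.image_singleton, hfixΓ, hfixΔ] at hroot₁
      obtain ⟨d₂, hd₂, hnw₂, hroot₂, hh₂⟩ :=
        ih (height d₀) (by omega) d₁ ({fsubst ⇑(Equiv.swap a b) B} ∪ Γ) Δ
          (le_of_eq hh₁) hd₁ hnw₁ hroot₁
      rw [Set.union_left_comm] at hroot₂
      have key : fEx b (fsubst ⇑(Equiv.swap a b) B) = fEx a B := by
        simp only [fEx, fsubst_comp]
        congr 1
        apply fsubst_congr
        intro v hv
        by_cases hva : v = a
        · subst hva; simp [Function.comp, Equiv.swap_apply_left]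
        · have hvb : v ≠ b := fun h => hbB (h ▸ hv)
          simp [Function.comp, Equiv.swap_apply_of_ne_of_ne hva hvb, hvb, hva]
      refine ⟨.ExL ({A} ∪ Γ, Δ) d₂, ⟨(Set.finite_singleton A).union h1, h2, b,
        fsubst ⇑(Equiv.swap a b) B, key ▸ Set.mem_union_right _ hmem, ?_, hd₂, hroot₂⟩,
        hnw₂, rfl, by simp [height, hh₂, hh₁]⟩
      intro hx
      rw [mem_fvs] at hx
      obtain ⟨C, hC, hxC⟩ := hx
      rcases hC with (hC | hC) | hC
      · rw [Set.mem_singleton_iff] at hC; subst hC; exact hbA hxC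
      · exact hbΓΔ (mem_fvs.mpr ⟨C, Set.mem_union_left _ hC, hxC⟩)
      · exact hbΓΔ (mem_fvs.mpr ⟨C, Set.mem_union_right _ hC, hxC⟩)
  | WL s d₀ => exact hnw.elim
  | WR s d₀ => exact hnw.elim
theorem weakening_left_admissible (d : Deriv) (Γ Δ : Set form) (A : form)
    (hd : is_deriv d) (hnw : noW d) (hr : root d = (Γ, Δ)) :
    ∃ d', is_deriv d' ∧ noW d' ∧ root d' = ({A} ∪ Γ, Δ) ∧ height d' = height d :=
  weaken_aux A (height d) d Γ Δ le_rfl hd hnw hr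

end Craig
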